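/- For vectors a, b ∈ {0,1}^d, the string VG'(b) can be derived from the regular expression VG(a) if and only if a·b = 0, where VG(a) = CG(a₁) y CG(a₂) y … y CG(a_d) with CG(0) = x⁺ and CG(1) = x⁺x⁺, and VG'(b) = CG'(b₁) y CG'(b₂) y … y CG'(b_d) with CG'(0) = "xx" and CG'(1) = "x". -/

import Mathlib

open RegularExpression

/-- Kleene plus: one or more repetitions. -/
def plusRE {α : Type*} (P : RegularExpression α) : RegularExpression α := P * P.star

/-- Alphabet `{x, y}` encoded as `Bool`: `x = true`, `y = false`.
Coordinate gadget: `CG 0 = x⁺`, `CG 1 = x⁺x⁺`. -/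
def CG : Bool → RegularExpression Bool
  | false => plusRE (char true)
  | true  => plusRE (char true) * plusRE (char true)

/-- Text coordinate gadget: `CG' 0 = "xx"`, `CG' 1 = "x"`. -/
def CG' : Bool → List Bool
  | false => [true, true]
  | true  => [true]

/-- Pattern vector gadget: coordinate gadgets separated by the literal `y`. -/
def VG {d : ℕ} (a : Fin d → Bool) : RegularExpression Bool :=
  (List.intersperse (char false) (List.ofFn fun j => CG (a j))).prod

/-- Text vector gadget: coordinate strings separated by `y`. -/
def VG' {d : ℕ} (b : Fin d → Bool) : List Bool :=
  List.intercalate [false] (List.ofFn fun j => CG' (b j))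

lemma lang_mem_singleton_iff {α : Type*} {a b : List α} :
    a ∈ ({b} : Language α) ↔ a = b := Iff.rfl

lemma mem_star_char {w : List Bool} :
    w ∈ ((char true : RegularExpression Bool).star).matches' ↔ ∀ c ∈ w, c = true := by
  rw [matches'_star]
  constructor
  · rintro h c hc
    rw [Language.mem_kstar] at h
    obtain ⟨L, rfl, hL⟩ := h
    rw [List.mem_flatten] at hc
    obtain ⟨y, hy, hcy⟩ := hc
    have := hL y hy
    rw [matches'_char, lang_mem_singleton_iff] at this
    subst this
    simpa using hcy
  · intro h
    rw [Language.mem_kstar]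
    refine ⟨w.map (fun c => [c]), ?_, ?_⟩
    · clear h
      induction w with
      | nil => rfl
      | cons c l ih => simpa using ih
    · intro y hy
      simp only [List.mem_map] at hy
      obtain ⟨c, hc, rfl⟩ := hy
      rw [matches'_char, lang_mem_singleton_iff, h c hc]

lemma mem_plus {w : List Bool} :
    w ∈ (plusRE (char true)).matches' ↔ w ≠ [] ∧ ∀ c ∈ w, c = true := by
  rw [plusRE, matches'_mul]
  constructor
  · rintro h
    rw [Language.mem_mul] at h
    obtain ⟨u, hu, v, hv, rfl⟩ := h
    rw [matches'_char, lang_mem_singleton_iff] at hu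
    subst hu
    rw [mem_star_char] at hv
    refine ⟨by simp, ?_⟩
    intro c hc
    rcases List.mem_cons.mp hc with h | h
    · exact h
    · exact hv c h
  · rintro ⟨hne, h⟩
    cases w with
    | nil => exact absurd rfl hne
    | cons c l =>
      rw [Language.mem_mul]
      refine ⟨[c], ?_, l, ?_, rfl⟩
      · rw [matches'_char, lang_mem_singleton_iff, h c List.mem_cons_self]
      · rw [mem_star_char]; exact fun x hx => h x (List.mem_cons_of_mem _ hx)

lemma mem_CG_allTrue {a : Bool} {w : List Bool} (h : w ∈ (CG a).matches') :
    w ≠ [] ∧ ∀ c ∈ w, c = true := by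
  cases a with
  | false => exact mem_plus.mp h
  | true =>
    rw [CG, matches'_mul, Language.mem_mul] at h
    obtain ⟨u, hu, v, hv, rfl⟩ := h
    rw [mem_plus] at hu hv
    constructor
    · simp [hu.1]
    · intro c hc
      rcases List.mem_append.mp hc with h | h
      · exact hu.2 c h
      · exact hv.2 c h

lemma CG'_mem_CG {a b : Bool} : CG' b ∈ (CG a).matches' ↔ (a && b) = false := by
  cases a with
  | false =>
    simp only [Bool.false_and]
    cases b <;> simp [CG, CG', mem_plus]
  | true =>
    rw [CG, matches'_mul, Language.mem_mul]
    cases b with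
    | false =>
      simp only [Bool.and_false, iff_true]
      exact ⟨[true], mem_plus.mpr (by simp), [true], mem_plus.mpr (by simp), rfl⟩
    | true =>
      simp only [Bool.and_true, CG']
      constructor
      · rintro ⟨u, hu, v, hv, huv⟩
        rw [mem_plus] at hu hv
        have hl : u.length + v.length = 1 := by
          have := congrArg List.length huv; simpa using this
        have hu1 : 1 ≤ u.length := List.length_pos_iff.mpr hu.1
        have hv1 : 1 ≤ v.length := List.length_pos_iff.mpr hv.1
        omega
      · intro h; simp at h

lemma split_eq : ∀ (u s v t : List Bool), (∀ c ∈ u, c = true) → (∀ c ∈ s, c = true) →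
    u ++ false :: v = s ++ false :: t → u = s ∧ v = t := by
  intro u
  induction u with
  | nil =>
    intro s v t _ hs h
    cases s with
    | nil => simpa using h
    | cons c s' =>
      simp only [List.nil_append, List.cons_append, List.cons.injEq] at h
      have := hs c (by simp)
      simp [this] at h
  | cons c u' ih =>
    intro s v t hu hs h
    cases s with
    | nil =>
      simp only [List.cons_append, List.nil_append, List.cons.injEq] at h
      have := hu c (by simp)
      simp [this] at h
    | cons c' s' =>
      simp only [List.cons_append, List.cons.injEq] at h
      obtain ⟨h1, h2⟩ := h
      have := ih s' v t (fun x hx => hu x (List.mem_cons_of_mem _ hx))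
        (fun x hx => hs x (List.mem_cons_of_mem _ hx)) h2
      exact ⟨by rw [h1, this.1], this.2⟩

lemma main_aux : ∀ (as bs : List Bool), as.length = bs.length →
    (List.intercalate [false] (bs.map CG') ∈
      ((List.intersperse (char false) (as.map CG)).prod).matches' ↔
    ∀ i, (as.getD i false && bs.getD i false) = false) := by
  intro as
  induction as with
  | nil =>
    intro bs h
    rw [List.length_nil] at h
    have : bs = [] := List.length_eq_zero_iff.mp h.symm
    subst this
    simp [List.intercalate]
  | cons a as' ih =>
    intro bs h
    cases bs with
    | nil => simp at h
    | cons b bs' =>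
      simp only [List.length_cons, Nat.succ.injEq] at h
      cases as' with
      | nil =>
        have : bs' = [] := List.length_eq_zero_iff.mp h.symm
        subst this
        simp only [List.map_cons, List.map_nil, List.intersperse_singleton,
          List.intercalate, List.intersperse_singleton, List.flatten]
        rw [List.prod_cons, List.prod_nil, matches'_mul, matches'_epsilon, mul_one]
        simp only [List.append_eq, List.flatten_cons, List.flatten_nil, List.append_nil]
        rw [CG'_mem_CG]
        constructor
        · intro hab i
          cases i with
          | zero => simpa using hab
          | succ n => simp
        · intro h2
          have := h2 0
          simpa using this
      | cons a2 as'' =>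
        cases bs' with
        | nil => simp at h
        | cons b2 bs'' =>
          have hword : List.intercalate [false] ((b :: b2 :: bs'').map CG') =
              CG' b ++ false :: List.intercalate [false] ((b2 :: bs'').map CG') := by
            simp [List.intercalate, List.intersperse_cons_cons, List.flatten]
          have hre : List.intersperse (char false) ((a :: a2 :: as'').map CG) =
              CG a :: (char false : RegularExpression Bool) ::
                List.intersperse (char false) ((a2 :: as'').map CG) := by
            simp [List.intersperse_cons_cons]
          rw [hword, hre, List.prod_cons, List.prod_cons, matches'_mul, matches'_mul,
            Language.mem_mul]
          have hlen : (a2 :: as'').length = (b2 :: bs'').length := h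
          constructor
          · rintro ⟨u, hu, v, hv, huv⟩
            rw [Language.mem_mul] at hv
            obtain ⟨t, ht, v', hv', rfl⟩ := hv
            rw [matches'_char, lang_mem_singleton_iff] at ht
            subst ht
            obtain ⟨hune, hutrue⟩ := mem_CG_allTrue hu
            have hCG'true : ∀ c ∈ CG' b, c = true := by cases b <;> simp [CG']
            rw [show [false] ++ v' = false :: v' from rfl] at huv
            obtain ⟨he1, he2⟩ := split_eq u (CG' b) v'
              (List.intercalate [false] ((b2 :: bs'').map CG')) hutrue hCG'true huv
            subst he1; subst he2
            have := (ih (b2 :: bs'') hlen).mp hv'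
            intro i
            cases i with
            | zero =>
              have hm : CG' b ∈ (CG a).matches' := hu
              simpa using CG'_mem_CG.mp hm
            | succ n => simpa using this n
          · intro hi
            refine ⟨CG' b, CG'_mem_CG.mpr (by simpa using hi 0), _,
              Language.mem_mul.mpr ⟨[false], by rw [matches'_char]; rfl,
                List.intercalate [false] ((b2 :: bs'').map CG'),
                (ih (b2 :: bs'') hlen).mpr (fun n => by simpa using hi (n+1)), rfl⟩, rfl⟩

theorem stmt4 {d : ℕ} (a b : Fin d → Bool) :
    VG' b ∈ (VG a).matches' ↔ ∀ j, (a j && b j) = false := by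
  rw [VG, VG']
  rw [show (List.ofFn fun j => CG (a j)) = (List.ofFn a).map CG from (List.map_ofFn (f := a) (g := CG)).symm]
  rw [show (List.ofFn fun j => CG' (b j)) = (List.ofFn b).map CG' from (List.map_ofFn (f := b) (g := CG')).symm]
  rw [main_aux (List.ofFn a) (List.ofFn b) (by simp)]
  constructor
  · intro h j
    have := h j
    simpa [List.getD_eq_getElem?_getD, List.getElem?_ofFn, j.isLt] using this
  · intro h i
    by_cases hi : i < d
    · have := h ⟨i, hi⟩
      simpa [List.getD_eq_getElem?_getD, List.getElem?_ofFn, hi] using this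
    · have h1 : (List.ofFn a).getD i false = false :=
        List.getD_eq_default _ _ (by simpa using Nat.le_of_not_lt hi)
      rw [h1]; simp
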